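/- arXiv:1211.3301 — 3 statements merged into one kernel-verified Lean document; each statement's English description precedes it below -/
import Mathlib

section
/- Let X_1, X_2, … be i.i.d. random variables with E X_k = 0, Var X_k = 1 such that φ(t) = log E e^{t X_1} is finite on [0, t_0) for some t_0 > 0, and assume that for some α < 2 one has P[X_1 > x] > e^{−x^α} for all sufficiently large x. Then for every a > 0, lim_{n→∞} P[ M_n = M_n(1, a log n) ] = 1. -/
open MeasureTheory ProbabilityTheory Filter

noncomputable section

/-- Partial sums of the sequence `X` (here `X k` plays the role of `X_{k+1}`),
so `pSum X n = X_1 + ⋯ + X_n` and `pSum X 0 = 0`. -/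
def pSum {Ω : Type*} (X : ℕ → Ω → ℝ) (n : ℕ) (ω : Ω) : ℝ := ∑ k ∈ Finset.range n, X k ω

/-- The multiscale scan statistic `M_n = max_{0 ≤ i < j ≤ n} (S_j - S_i)/√(j-i)`. -/
noncomputable def scanStat {Ω : Type*} (X : ℕ → Ω → ℝ) (n : ℕ) (ω : Ω) : ℝ :=
  ⨆ p : {p : ℕ × ℕ // p.1 < p.2 ∧ p.2 ≤ n},
    (pSum X p.1.2 ω - pSum X p.1.1 ω) / Real.sqrt ((p.1.2 : ℝ) - (p.1.1 : ℝ))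

/-- The restricted multiscale scan statistic
`M_n(h₁,h₂) = max_{0 ≤ i < j ≤ n, h₁ ≤ j-i ≤ h₂} (S_j - S_i)/√(j-i)`. -/
noncomputable def scanStatR {Ω : Type*} (X : ℕ → Ω → ℝ) (n : ℕ) (h₁ h₂ : ℝ) (ω : Ω) : ℝ :=
  ⨆ p : {p : ℕ × ℕ // p.1 < p.2 ∧ p.2 ≤ n ∧
      h₁ ≤ (p.2 : ℝ) - (p.1 : ℝ) ∧ (p.2 : ℝ) - (p.1 : ℝ) ≤ h₂},
    (pSum X p.1.2 ω - pSum X p.1.1 ω) / Real.sqrt ((p.1.2 : ℝ) - (p.1.1 : ℝ))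

/-! ### Auxiliary lemmas -/

lemma finite_aux (n : ℕ) (P : ℕ × ℕ → Prop) (h : ∀ p, P p → p.1 ≤ n ∧ p.2 ≤ n) :
    Finite {p : ℕ × ℕ // P p} := by
  have hs : {p : ℕ × ℕ | P p} ⊆ Set.Iic n ×ˢ Set.Iic n := fun p hp => ⟨(h p hp).1, (h p hp).2⟩
  exact Set.Finite.to_subtype (Set.Finite.subset ((Set.finite_Iic n).prod (Set.finite_Iic n)) hs)

lemma scan_eq {Ω : Type*} (X : ℕ → Ω → ℝ) (n : ℕ) (h₂ u : ℝ) (hh : 1 ≤ h₂) (ω : Ω)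
    (hshort : ∃ k, k < n ∧ u ≤ X k ω)
    (hlong : ∀ i j : ℕ, i < j → j ≤ n → h₂ < (j : ℝ) - (i : ℝ) →
      (pSum X j ω - pSum X i ω) / Real.sqrt ((j : ℝ) - (i : ℝ)) < u) :
    scanStat X n ω = scanStatR X n 1 h₂ ω := by
  obtain ⟨k, hk, hku⟩ := hshort
  haveI F1 : Finite {p : ℕ × ℕ // p.1 < p.2 ∧ p.2 ≤ n} :=
    finite_aux n _ (fun p hp => ⟨le_trans (le_of_lt hp.1) hp.2, hp.2⟩)
  haveI F2 : Finite {p : ℕ × ℕ // p.1 < p.2 ∧ p.2 ≤ n ∧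
      (1:ℝ) ≤ (p.2 : ℝ) - (p.1 : ℝ) ∧ (p.2 : ℝ) - (p.1 : ℝ) ≤ h₂} :=
    finite_aux n _ (fun p hp => ⟨le_trans (le_of_lt hp.1) hp.2.1, hp.2.1⟩)
  set f : {p : ℕ × ℕ // p.1 < p.2 ∧ p.2 ≤ n} → ℝ :=
    fun p => (pSum X p.1.2 ω - pSum X p.1.1 ω) / Real.sqrt ((p.1.2 : ℝ) - (p.1.1 : ℝ)) with hf
  set g : {p : ℕ × ℕ // p.1 < p.2 ∧ p.2 ≤ n ∧
      (1:ℝ) ≤ (p.2 : ℝ) - (p.1 : ℝ) ∧ (p.2 : ℝ) - (p.1 : ℝ) ≤ h₂} → ℝ :=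
    fun p => (pSum X p.1.2 ω - pSum X p.1.1 ω) / Real.sqrt ((p.1.2 : ℝ) - (p.1.1 : ℝ)) with hg
  have hwit : ((k, k+1) : ℕ × ℕ).1 < (k, k+1).2 ∧ (k, k+1).2 ≤ n ∧
      (1:ℝ) ≤ ((k+1 : ℕ) : ℝ) - (k : ℝ) ∧ ((k+1 : ℕ) : ℝ) - (k : ℝ) ≤ h₂ := by
    refine ⟨Nat.lt_succ_self k, hk, ?_, ?_⟩ <;> push_cast <;> simp [hh]
  have hBf : BddAbove (Set.range f) := (Set.finite_range f).bddAbove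
  have hBg : BddAbove (Set.range g) := (Set.finite_range g).bddAbove
  have hgw : u ≤ g ⟨(k, k+1), hwit⟩ := by
    have : pSum X (k+1) ω - pSum X k ω = X k ω := by
      simp [pSum, Finset.sum_range_succ]
    simp only [hg, this]
    have : (((k+1 : ℕ) : ℝ) - (k : ℝ)) = 1 := by push_cast; ring
    rw [this, Real.sqrt_one, div_one]
    exact hku
  have hu : u ≤ scanStatR X n 1 h₂ ω := hgw.trans (le_ciSup hBg _)
  haveI N2 : Nonempty {p : ℕ × ℕ // p.1 < p.2 ∧ p.2 ≤ n ∧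
      (1:ℝ) ≤ (p.2 : ℝ) - (p.1 : ℝ) ∧ (p.2 : ℝ) - (p.1 : ℝ) ≤ h₂} := ⟨⟨(k, k+1), hwit⟩⟩
  haveI N1 : Nonempty {p : ℕ × ℕ // p.1 < p.2 ∧ p.2 ≤ n} := ⟨⟨(k, k+1), hwit.1, hwit.2.1⟩⟩
  have h1 : scanStatR X n 1 h₂ ω ≤ scanStat X n ω := by
    apply ciSup_le
    intro p
    exact le_ciSup_of_le hBf ⟨p.1, p.2.1, p.2.2.1⟩ le_rfl
  have h2 : scanStat X n ω ≤ scanStatR X n 1 h₂ ω := by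
    apply ciSup_le
    rintro ⟨⟨i, j⟩, hij, hjn⟩
    by_cases hc : (j : ℝ) - (i : ℝ) ≤ h₂
    · have hone : (1:ℝ) ≤ (j : ℝ) - (i : ℝ) := by
        have : (i : ℝ) + 1 ≤ (j : ℝ) := by exact_mod_cast hij
        linarith
      exact le_ciSup_of_le hBg ⟨(i, j), hij, hjn, hone, hc⟩ le_rfl
    · exact le_trans (le_of_lt (hlong i j hij hjn (not_le.mp hc))) hu
  exact le_antisymm h2 h1

lemma exp_quad_nonpos {y : ℝ} (hy : y ≤ 0) : Real.exp y ≤ 1 + y + y ^ 2 / 2 := by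
  set f : ℝ → ℝ := fun x => 1 + x + x ^ 2 / 2 - Real.exp x with hf
  have hd : ∀ x : ℝ, HasDerivAt f (1 + x - Real.exp x) x := by
    intro x
    have h1 : HasDerivAt (fun x : ℝ => 1 + x + x ^ 2 / 2) (1 + x) x := by
      have := ((hasDerivAt_id x).const_add 1).add
        (((hasDerivAt_pow 2 x)).div_const 2)
      exact this.congr_deriv (by push_cast; ring)
    exact h1.sub (Real.hasDerivAt_exp x)
  have hanti : AntitoneOn f (Set.Iic 0) := by
    apply antitoneOn_of_deriv_nonpos (convex_Iic 0)
    · exact (Continuous.continuousOn (by fun_prop))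
    · intro x hx
      exact (hd x).differentiableAt.differentiableWithinAt
    · intro x hx
      rw [(hd x).deriv]
      have := Real.add_one_le_exp x
      linarith
  have h0 : f 0 ≤ f y := hanti (Set.mem_Iic.mpr hy) (Set.mem_Iic.mpr le_rfl) hy
  simp [hf, Real.exp_zero] at h0
  linarith

lemma quad_le_exp {y : ℝ} (hy : 0 ≤ y) : 1 + y + y ^ 2 / 2 ≤ Real.exp y := by
  set f : ℝ → ℝ := fun x => Real.exp x - (1 + x + x ^ 2 / 2) with hf
  have hd : ∀ x : ℝ, HasDerivAt f (Real.exp x - (1 + x)) x := by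
    intro x
    have h1 : HasDerivAt (fun x : ℝ => 1 + x + x ^ 2 / 2) (1 + x) x := by
      have := ((hasDerivAt_id x).const_add 1).add
        (((hasDerivAt_pow 2 x)).div_const 2)
      exact this.congr_deriv (by push_cast; ring)
    exact (Real.hasDerivAt_exp x).sub h1
  have hmono : MonotoneOn f (Set.Ici 0) := by
    apply monotoneOn_of_deriv_nonneg (convex_Ici 0)
    · exact (Continuous.continuousOn (by fun_prop))
    · intro x hx
      exact (hd x).differentiableAt.differentiableWithinAt
    · intro x hx
      rw [(hd x).deriv]
      have := Real.add_one_le_exp x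
      linarith
  have h0 : f 0 ≤ f y := hmono (Set.mem_Ici.mpr le_rfl) (Set.mem_Ici.mpr hy) hy
  simp [hf, Real.exp_zero] at h0
  linarith

lemma exp_quad_nonneg {y : ℝ} (hy : 0 ≤ y) :
    Real.exp y ≤ 1 + y + y ^ 2 / 2 * Real.exp y := by
  set f : ℝ → ℝ := fun x => 1 + x + x ^ 2 / 2 * Real.exp x - Real.exp x with hf
  have hd : ∀ x : ℝ, HasDerivAt f
      (1 + (x * Real.exp x + x ^ 2 / 2 * Real.exp x) - Real.exp x) x := by
    intro x
    have h2 : HasDerivAt (fun x : ℝ => x ^ 2 / 2 * Real.exp x)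
        (x * Real.exp x + x ^ 2 / 2 * Real.exp x) x := by
      have := ((hasDerivAt_pow 2 x).div_const 2).mul (Real.hasDerivAt_exp x)
      exact this.congr_deriv (by push_cast; ring)
    have h1 : HasDerivAt (fun x : ℝ => 1 + x + x ^ 2 / 2 * Real.exp x)
        (1 + (x * Real.exp x + x ^ 2 / 2 * Real.exp x)) x :=
      ((hasDerivAt_id x).const_add 1).add h2
    exact h1.sub (Real.hasDerivAt_exp x)
  have hmono : MonotoneOn f (Set.Ici 0) := by
    apply monotoneOn_of_deriv_nonneg (convex_Ici 0)
    · exact (Continuous.continuousOn (by fun_prop))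
    · intro x hx
      exact (hd x).differentiableAt.differentiableWithinAt
    · intro x hx
      rw [(hd x).deriv]
      have h1 : -x + 1 ≤ Real.exp (-x) := Real.add_one_le_exp (-x)
      have h2 : Real.exp x * Real.exp (-x) = 1 := by
        rw [← Real.exp_add]; simp
      have h3 : (0:ℝ) < Real.exp x := Real.exp_pos x
      nlinarith [sq_nonneg x, mul_le_mul_of_nonneg_left h1 h3.le]
  have h0 : f 0 ≤ f y := hmono (Set.mem_Ici.mpr le_rfl) (Set.mem_Ici.mpr hy) hy
  simp [hf, Real.exp_zero] at h0
  linarith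

lemma pointwise_exp_bound (t t₁ x : ℝ) (ht : 0 ≤ t) (htt : t ≤ t₁) :
    Real.exp (t * x) ≤ 1 + t * x + t ^ 2 * (x ^ 2 * Real.exp (t₁ * max x 0)) / 2 := by
  rcases le_or_gt 0 x with hx | hx
  · have hy : 0 ≤ t * x := mul_nonneg ht hx
    have h1 := exp_quad_nonneg hy
    have h2 : Real.exp (t * x) ≤ Real.exp (t₁ * max x 0) := by
      apply Real.exp_le_exp.mpr
      rw [max_eq_left hx]
      exact mul_le_mul_of_nonneg_right htt hx
    have h3 : (t * x) ^ 2 / 2 * Real.exp (t * x) ≤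
        t ^ 2 * (x ^ 2 * Real.exp (t₁ * max x 0)) / 2 := by
      have := mul_le_mul_of_nonneg_left h2 (by positivity : (0:ℝ) ≤ (t * x) ^ 2 / 2)
      calc (t * x) ^ 2 / 2 * Real.exp (t * x)
          ≤ (t * x) ^ 2 / 2 * Real.exp (t₁ * max x 0) := this
        _ = t ^ 2 * (x ^ 2 * Real.exp (t₁ * max x 0)) / 2 := by ring
    linarith
  · have hy : t * x ≤ 0 := mul_nonpos_of_nonneg_of_nonpos ht hx.le
    have h1 := exp_quad_nonpos hy
    have hm : max x 0 = 0 := max_eq_right hx.le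
    rw [hm, mul_zero, Real.exp_zero]
    calc Real.exp (t * x) ≤ 1 + t * x + (t * x) ^ 2 / 2 := h1
      _ = 1 + t * x + t ^ 2 * (x ^ 2 * 1) / 2 := by ring

section MainAux

variable {Ω : Type*} [MeasureSpace Ω] [IsProbabilityMeasure (ℙ : Measure Ω)]

omit [IsProbabilityMeasure (ℙ : Measure Ω)] in
lemma dom_integrable (Y : Ω → ℝ) (hYm : Measurable Y) (hY2 : Integrable (fun ω => Y ω ^ 2) ℙ)
    (t₀ : ℝ) (ht₀ : 0 < t₀) (hmgf : Integrable (fun ω => Real.exp (3 * t₀ / 4 * Y ω)) ℙ) :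
    Integrable (fun ω => Y ω ^ 2 * Real.exp (t₀ / 2 * max (Y ω) 0)) ℙ := by
  set δ : ℝ := t₀ / 4 with hδ
  have hδpos : 0 < δ := by positivity
  have hbound : ∀ ω, |Y ω ^ 2 * Real.exp (t₀ / 2 * max (Y ω) 0)| ≤
      Y ω ^ 2 + 2 / δ ^ 2 * Real.exp (3 * t₀ / 4 * Y ω) := by
    intro ω
    set x := Y ω
    rw [abs_of_nonneg (by positivity)]
    rcases le_or_gt 0 x with hx | hx
    · rw [max_eq_left hx]
      have h1 : (δ * x) ^ 2 / 2 ≤ Real.exp (δ * x) := by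
        have := quad_le_exp (y := δ * x) (by positivity)
        nlinarith [mul_nonneg hδpos.le hx]
      have h2 : x ^ 2 ≤ 2 / δ ^ 2 * Real.exp (δ * x) := by
        rw [div_mul_eq_mul_div, le_div_iff₀ (by positivity : (0:ℝ) < δ ^ 2)]
        nlinarith
      have h3 : x ^ 2 * Real.exp (t₀ / 2 * x) ≤
          2 / δ ^ 2 * Real.exp (δ * x) * Real.exp (t₀ / 2 * x) :=
        mul_le_mul_of_nonneg_right h2 (Real.exp_pos _).le
      have h4 : 2 / δ ^ 2 * Real.exp (δ * x) * Real.exp (t₀ / 2 * x)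
          = 2 / δ ^ 2 * Real.exp (3 * t₀ / 4 * x) := by
        rw [mul_assoc, ← Real.exp_add]
        congr 2
        rw [hδ]; ring
      nlinarith [sq_nonneg x]
    · rw [max_eq_right hx.le, mul_zero, Real.exp_zero, mul_one]
      have h5 : 0 ≤ 2 / δ ^ 2 * Real.exp (3 * t₀ / 4 * x) := by positivity
      linarith
  refine Integrable.mono' (hY2.add (hmgf.const_mul (2 / δ ^ 2))) ?_ (ae_of_all _ hbound)
  exact ((hYm.pow_const 2).mul (((hYm.max measurable_const).const_mul _).exp)).aestronglyMeasurable

lemma cgf_quadratic_bound (Y : Ω → ℝ) (hYm : Measurable Y)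
    (hY1 : Integrable Y ℙ) (hmean : ∫ ω, Y ω ∂ℙ = 0)
    (t₁ : ℝ)
    (hM : Integrable (fun ω => Y ω ^ 2 * Real.exp (t₁ * max (Y ω) 0)) ℙ)
    (t : ℝ) (ht : 0 ≤ t) (htt : t ≤ t₁) :
    cgf Y ℙ t ≤ ((∫ ω, Y ω ^ 2 * Real.exp (t₁ * max (Y ω) 0) ∂ℙ) / 2 + 1) * t ^ 2 := by
  set M : ℝ := ∫ ω, Y ω ^ 2 * Real.exp (t₁ * max (Y ω) 0) ∂ℙ with hMdef
  have hM0 : 0 ≤ M := integral_nonneg (fun ω => by positivity)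
  have hcomb : Integrable (fun ω => 1 + t * Y ω
      + t ^ 2 * (Y ω ^ 2 * Real.exp (t₁ * max (Y ω) 0)) / 2) ℙ := by
    apply Integrable.add
    apply Integrable.add (integrable_const 1) (hY1.const_mul t)
    simpa [mul_div_assoc] using (hM.const_mul (t ^ 2)).div_const 2
  have hpt : ∀ ω, Real.exp (t * Y ω) ≤ 1 + t * Y ω
      + t ^ 2 * (Y ω ^ 2 * Real.exp (t₁ * max (Y ω) 0)) / 2 :=
    fun ω => pointwise_exp_bound t t₁ (Y ω) ht htt
  have hexp_int : Integrable (fun ω => Real.exp (t * Y ω)) ℙ := by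
    refine Integrable.mono' hcomb ((hYm.const_mul t).exp.aestronglyMeasurable) ?_
    exact ae_of_all _ (fun ω => by
      rw [Real.norm_eq_abs, abs_of_nonneg (Real.exp_pos _).le]; exact hpt ω)
  have hmgf_le : mgf Y ℙ t ≤ 1 + t ^ 2 * M / 2 := by
    have h1 : mgf Y ℙ t ≤ ∫ ω, (1 + t * Y ω
        + t ^ 2 * (Y ω ^ 2 * Real.exp (t₁ * max (Y ω) 0)) / 2) ∂ℙ :=
      integral_mono hexp_int hcomb hpt
    have hA : Integrable (fun ω => 1 + t * Y ω) ℙ :=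
      (integrable_const (1:ℝ)).add (hY1.const_mul t)
    have hB : Integrable
        (fun ω => t ^ 2 * (Y ω ^ 2 * Real.exp (t₁ * max (Y ω) 0)) / 2) ℙ :=
      (hM.const_mul (t ^ 2)).div_const 2
    have h2 : ∫ ω, (1 + t * Y ω
        + t ^ 2 * (Y ω ^ 2 * Real.exp (t₁ * max (Y ω) 0)) / 2) ∂ℙ
        = 1 + t * (∫ ω, Y ω ∂ℙ) + t ^ 2 * M / 2 := by
      rw [integral_add hA hB, integral_add (integrable_const 1) (hY1.const_mul t),
        integral_const, integral_const_mul, integral_div, integral_const_mul]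
      simp [hMdef]
    rw [h2, hmean] at h1
    simpa using h1
  have hmgfpos : 0 < mgf Y ℙ t := mgf_pos hexp_int
  have hlog : cgf Y ℙ t ≤ Real.log (1 + t ^ 2 * M / 2) :=
    Real.log_le_log hmgfpos hmgf_le
  have h3 : Real.log (1 + t ^ 2 * M / 2) ≤ t ^ 2 * M / 2 := by
    have := Real.log_le_sub_one_of_pos (x := 1 + t ^ 2 * M / 2) (by positivity)
    linarith
  calc cgf Y ℙ t ≤ t ^ 2 * M / 2 := hlog.trans h3
    _ ≤ (M / 2 + 1) * t ^ 2 := by nlinarith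

lemma block_chernoff (X : ℕ → Ω → ℝ) (hmeas : ∀ i, Measurable (X i))
    (hindep : iIndepFun X ℙ)
    (hident : ∀ i, IdentDistrib (X i) (X 0) ℙ ℙ)
    (t : ℝ) (ht0 : 0 ≤ t) (hint : Integrable (fun ω => Real.exp (t * X 0 ω)) ℙ)
    (i j : ℕ) (hij : i ≤ j) (v : ℝ) :
    (ℙ {ω | v ≤ pSum X j ω - pSum X i ω}).toReal ≤
      Real.exp (-t * v + ((j - i : ℕ) : ℝ) * cgf (X 0) ℙ t) := by
  have hg : Measurable (fun x : ℝ => Real.exp (t * x)) := by fun_prop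
  have hid : ∀ k, IdentDistrib (fun ω => Real.exp (t * X k ω))
      (fun ω => Real.exp (t * X 0 ω)) ℙ ℙ := fun k => (hident k).comp hg
  have hints : ∀ k ∈ Finset.Ico i j, Integrable (fun ω => Real.exp (t * X k ω)) ℙ :=
    fun k _ => (hid k).integrable_iff.mpr hint
  have hset : {ω | v ≤ pSum X j ω - pSum X i ω}
      = {ω | v ≤ (∑ k ∈ Finset.Ico i j, X k) ω} := by
    ext ω
    simp only [Set.mem_setOf_eq, Finset.sum_apply]
    rw [Finset.sum_Ico_eq_sub _ hij]
    rfl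
  rw [hset]
  refine le_trans (measure_ge_le_exp_cgf v ht0
    (hindep.integrable_exp_mul_sum hmeas hints)) ?_
  apply Real.exp_le_exp.mpr
  have hcgf : cgf (∑ k ∈ Finset.Ico i j, X k) ℙ t = ((j - i : ℕ) : ℝ) * cgf (X 0) ℙ t := by
    rw [hindep.cgf_sum hmeas hints]
    have : ∀ k ∈ Finset.Ico i j, cgf (X k) ℙ t = cgf (X 0) ℙ t := by
      intro k _
      unfold cgf mgf
      rw [(hid k).integral_eq]
    rw [Finset.sum_congr rfl this, Finset.sum_const, Nat.card_Ico, nsmul_eq_mul]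
  rw [hcgf]

lemma gap_event (X : ℕ → Ω → ℝ) (hmeas : ∀ i, Measurable (X i))
    (hindep : iIndepFun X ℙ)
    (hident : ∀ i, IdentDistrib (X i) (X 0) ℙ ℙ)
    (n : ℕ) (u r : ℝ) (hr0 : 0 ≤ r)
    (hr : r < (ℙ {ω | u < X 0 ω}).toReal) :
    (ℙ (⋂ k ∈ Finset.range n, X k ⁻¹' Set.Iio u)).toReal ≤ Real.exp (-((n : ℝ) * r)) := by
  have hprod : ℙ (⋂ k ∈ Finset.range n, X k ⁻¹' Set.Iio u)
      = (ℙ (X 0 ⁻¹' Set.Iio u)) ^ n := by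
    rw [hindep.meas_biInter (S := Finset.range n)
      (fun k _ => ⟨Set.Iio u, measurableSet_Iio, rfl⟩)]
    have : ∀ k ∈ Finset.range n, ℙ (X k ⁻¹' Set.Iio u) = ℙ (X 0 ⁻¹' Set.Iio u) :=
      fun k _ => (hident k).measure_mem_eq measurableSet_Iio
    rw [Finset.prod_congr rfl this, Finset.prod_const, Finset.card_range]
  set q : ℝ := (ℙ (X 0 ⁻¹' Set.Iio u)).toReal with hq
  have hq0 : 0 ≤ q := ENNReal.toReal_nonneg
  have hq1 : q ≤ 1 - r := by
    have hdisj : Disjoint (X 0 ⁻¹' Set.Iio u) {ω | u < X 0 ω} := by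
      rw [Set.disjoint_left]
      intro ω h1 h2
      have a1 : X 0 ω < u := h1
      have a2 : u < X 0 ω := h2
      exact absurd (lt_trans a1 a2) (lt_irrefl _)
    have hsum : ℙ (X 0 ⁻¹' Set.Iio u) + ℙ {ω | u < X 0 ω} ≤ 1 := by
      rw [← measure_union hdisj ((hmeas 0) measurableSet_Ioi)]
      exact prob_le_one
    have := ENNReal.toReal_mono (by simp) hsum
    rw [ENNReal.toReal_add (measure_ne_top _ _) (measure_ne_top _ _)] at this
    simp only [ENNReal.toReal_one] at this
    linarith
  calc (ℙ (⋂ k ∈ Finset.range n, X k ⁻¹' Set.Iio u)).toReal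
      = q ^ n := by rw [hprod, ENNReal.toReal_pow]
    _ ≤ (1 - r) ^ n := pow_le_pow_left₀ hq0 hq1 n
    _ ≤ Real.exp (-r) ^ n := by
        apply pow_le_pow_left₀ (by linarith)
        linarith [Real.add_one_le_exp (-r)]
    _ = Real.exp (-((n : ℝ) * r)) := by
        rw [← Real.exp_nat_mul]
        congr 1; ring

omit [IsProbabilityMeasure (ℙ : Measure Ω)] in
lemma degenerate_case [IsProbabilityMeasure (ℙ : Measure Ω)]
    (Y : Ω → ℝ) (t₀ : ℝ) (ht₀ : 0 < t₀)
    (hint : Integrable (fun ω => Real.exp (t₀ / 2 * Y ω)) ℙ)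
    (α : ℝ) (hα : α ≤ 0) (x₀ : ℝ)
    (htail : ∀ x : ℝ, x₀ ≤ x → Real.exp (-(x ^ α)) < (ℙ {ω | x < Y ω}).toReal) : False := by
  set t := t₀ / 2 with htdef
  have ht : 0 < t := by positivity
  set c := cgf Y ℙ t with hcdef
  set x := max (max x₀ 1) ((c + 1) / t + 1) with hxdef
  have hx₀ : x₀ ≤ x := le_trans (le_max_left _ _) (le_max_left _ _)
  have hx1 : (1:ℝ) ≤ x := le_trans (le_max_right _ _) (le_max_left _ _)
  have hxt : (c + 1) / t < x := lt_of_lt_of_le (by linarith) (le_max_right _ _)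
  have htx : c + 1 < t * x := by
    rw [div_lt_iff₀ ht] at hxt
    linarith
  have hchern : (ℙ {ω | x ≤ Y ω}).toReal ≤ Real.exp (-t * x + c) :=
    measure_ge_le_exp_cgf x ht.le hint
  have hmono : (ℙ {ω | x < Y ω}).toReal ≤ (ℙ {ω | x ≤ Y ω}).toReal :=
    ENNReal.toReal_mono (measure_ne_top _ _)
      (measure_mono (fun ω hω => le_of_lt (Set.mem_setOf_eq ▸ hω)))
  have hpow : x ^ α ≤ 1 := Real.rpow_le_one_of_one_le_of_nonpos hx1 hα
  have h1 : Real.exp (-1 : ℝ) ≤ Real.exp (-(x ^ α)) := by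
    apply Real.exp_le_exp.mpr; linarith
  have h2 : Real.exp (-t * x + c) < Real.exp (-1 : ℝ) := by
    apply Real.exp_lt_exp.mpr; linarith
  have := htail x hx₀
  linarith

end MainAux

lemma half_atTop : Tendsto (fun y : ℝ => y / 2) atTop atTop :=
  tendsto_id.atTop_div_const two_pos

lemma rpow_half_comp (β : ℝ) (hβ : 0 < β) :
    Tendsto (fun y : ℝ => (y / 2) ^ β) atTop atTop :=
  (tendsto_rpow_atTop hβ).comp half_atTop

lemma rpow_split {y : ℝ} (hy : 0 < y) (b c : ℝ) :
    (y / 2) ^ (b + c) = (y / 2) ^ b * (y / 2) ^ c :=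
  Real.rpow_add (by linarith) b c

lemma helper_sq (β : ℝ) (hβ : 1 / 2 < β) :
    Tendsto (fun y : ℝ => ((y / 2) ^ β) ^ 2 / y) atTop atTop := by
  have h1 : Tendsto (fun y : ℝ => (1 / 2) * (y / 2) ^ (β + β - 1)) atTop atTop :=
    (rpow_half_comp _ (by linarith)).const_mul_atTop (by norm_num)
  apply h1.congr'
  filter_upwards [eventually_gt_atTop (0 : ℝ)] with y hy
  have hy2 : (0 : ℝ) < y / 2 := by linarith
  have key : (y / 2) ^ (β + β) = (y / 2) ^ (β + β - 1) * (y / 2) := by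
    have := rpow_split hy (β + β - 1) 1
    rw [Real.rpow_one] at this
    rw [show β + β = β + β - 1 + 1 by ring, this]
    ring_nf
  rw [sq, ← rpow_split hy, key]
  field_simp

lemma helper_sqrt (β : ℝ) (hβ : 1 / 2 < β) :
    Tendsto (fun y : ℝ => (y / 2) ^ β * Real.sqrt y / y) atTop atTop := by
  have h1 : Tendsto (fun y : ℝ => (1 / Real.sqrt 2) * (y / 2) ^ (β - 1 / 2)) atTop atTop :=
    (rpow_half_comp _ (by linarith)).const_mul_atTop (by positivity)
  apply h1.congr'
  filter_upwards [eventually_gt_atTop (0 : ℝ)] with y hy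
  have hy2 : (0 : ℝ) < y / 2 := by linarith
  have hs : Real.sqrt y = Real.sqrt 2 * Real.sqrt (y / 2) := by
    rw [← Real.sqrt_mul (by norm_num : (0:ℝ) ≤ 2)]
    congr 1; ring
  have hhh : (y / 2) ^ β = (y / 2) ^ (β - 1 / 2) * Real.sqrt (y / 2) := by
    rw [show β = β - 1/2 + 1/2 by ring, rpow_split hy, ← Real.sqrt_eq_rpow]
    ring_nf
  have hsq : Real.sqrt (y / 2) * Real.sqrt (y / 2) = y / 2 :=
    Real.mul_self_sqrt hy2.le
  have h2 : Real.sqrt 2 * Real.sqrt 2 = 2 := Real.mul_self_sqrt (by norm_num)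
  have h2pos : (0:ℝ) < Real.sqrt 2 := by positivity
  rw [hs, hhh, eq_div_iff (ne_of_gt hy)]
  set A := (y / 2) ^ (β - 1/2)
  set s := Real.sqrt (y / 2)
  field_simp
  linear_combination (-(A * Real.sqrt 2 * Real.sqrt 2)) * hsq + (-(A * y / 2)) * h2

lemma exp_choice (K t₁ u L c : ℝ) (hK : 0 < K) (ht₁ : 0 < t₁) (hu : 0 ≤ u) (hL : 0 < L)
    (hC1 : 12 * K * c ≤ u ^ 2) (hC2 : 6 * c ≤ t₁ * (u * Real.sqrt L)) :
    ∃ t, 0 ≤ t ∧ t ≤ t₁ ∧ -t * (u * Real.sqrt L) + L * (K * t ^ 2) ≤ -(3 * c) := by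
  set s := Real.sqrt L with hsdef
  have hs : 0 < s := Real.sqrt_pos.mpr hL
  have hss : s ^ 2 = L := Real.sq_sqrt hL.le
  by_cases hcase : u / (2 * K * s) ≤ t₁
  · refine ⟨u / (2 * K * s), by positivity, hcase, ?_⟩
    have key : -(u / (2 * K * s)) * (u * s) + L * (K * (u / (2 * K * s)) ^ 2)
        = -(u ^ 2 / (4 * K)) := by
      rw [← hss]
      field_simp
      ring
    rw [key, neg_le_neg_iff]
    rw [le_div_iff₀ (by positivity : (0:ℝ) < 4 * K)]
    linarith
  · push_neg at hcase
    refine ⟨t₁, ht₁.le, le_rfl, ?_⟩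
    have h1 : t₁ * (2 * K * s) < u := by
      rw [lt_div_iff₀ (by positivity : (0:ℝ) < 2 * K * s)] at hcase
      linarith
    have h2 : L * (K * t₁ ^ 2) ≤ t₁ * (u * s) / 2 := by
      rw [← hss]
      nlinarith [mul_pos hs ht₁]
    linarith

/-- **Theorem 1.8 (sublogarithmic case).** -/
theorem sublogarithmic_small_scales
    {Ω : Type*} [MeasureSpace Ω] [IsProbabilityMeasure (ℙ : Measure Ω)]
    (X : ℕ → Ω → ℝ)
    (hmeas : ∀ i, Measurable (X i))
    (hindep : iIndepFun X ℙ)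
    (hident : ∀ i, IdentDistrib (X i) (X 0) ℙ ℙ)
    (hL2 : MemLp (X 0) 2 ℙ)
    (hmean : ∫ ω, X 0 ω ∂ℙ = 0)
    (hvar : ∫ ω, (X 0 ω) ^ 2 ∂ℙ = 1)
    (t₀ : ℝ) (ht₀ : 0 < t₀)
    (hmgf : ∀ t : ℝ, 0 ≤ t → t < t₀ → Integrable (fun ω => Real.exp (t * X 0 ω)) ℙ)
    (α : ℝ) (hα : α < 2)
    (htail : ∃ x₀ : ℝ, ∀ x : ℝ, x₀ ≤ x →
      Real.exp (-(x ^ α)) < (ℙ {ω | x < X 0 ω}).toReal)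
    (a : ℝ) (ha : 0 < a) :
    Tendsto (fun n : ℕ =>
        (ℙ {ω | scanStat X n ω = scanStatR X n 1 (a * Real.log n) ω}).toReal)
      atTop (nhds 1) := by
  obtain ⟨x₀, htail⟩ := htail
  -- degenerate case α ≤ 0
  rcases le_or_gt α 0 with hα0 | hα0
  · exact absurd (degenerate_case (X 0) t₀ ht₀
      (hmgf (t₀ / 2) (by positivity) (by linarith)) α hα0 x₀ htail) id
  -- main case 0 < α < 2
  set β : ℝ := 1 / α with hβdef
  have hβ : 1 / 2 < β := by
    rw [hβdef, div_lt_div_iff₀ two_pos hα0]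
    linarith
  have hβ0 : 0 < β := by linarith
  -- constants
  set M : ℝ := ∫ ω, (X 0 ω) ^ 2 * Real.exp (t₀ / 2 * max (X 0 ω) 0) ∂ℙ with hMdef
  set K : ℝ := M / 2 + 1 with hKdef
  have hM0 : 0 ≤ M := integral_nonneg (fun ω => by positivity)
  have hK : 0 < K := by rw [hKdef]; linarith
  have hX2 : Integrable (fun ω => (X 0 ω) ^ 2) ℙ := hL2.integrable_sq
  have hX1 : Integrable (X 0) ℙ := hL2.integrable (by norm_num)
  have hMint : Integrable (fun ω => (X 0 ω) ^ 2 * Real.exp (t₀ / 2 * max (X 0 ω) 0)) ℙ :=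
    dom_integrable (X 0) (hmeas 0) hX2 t₀ ht₀ (hmgf (3 * t₀ / 4) (by positivity) (by linarith))
  have hcgf : ∀ t : ℝ, 0 ≤ t → t ≤ t₀ / 2 → cgf (X 0) ℙ t ≤ K * t ^ 2 :=
    fun t ht htt => cgf_quadratic_bound (X 0) (hmeas 0) hX1 hmean (t₀ / 2) hMint t ht htt
  -- the threshold
  set u : ℕ → ℝ := fun n => ((Real.log n) / 2) ^ β with hudef
  set y : ℕ → ℝ := fun n => Real.log n with hydef
  have hy : Tendsto y atTop atTop :=
    Real.tendsto_log_atTop.comp tendsto_natCast_atTop_atTop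
  have hlog0 : ∀ n : ℕ, 0 ≤ Real.log n := by
    intro n
    rcases Nat.eq_zero_or_pos n with h | h
    · simp [h]
    · exact Real.log_nonneg (by exact_mod_cast h)
  have hu0 : ∀ n, 0 ≤ u n := fun n => Real.rpow_nonneg (by
    have := hlog0 n; linarith) _
  -- events
  set G : ℕ → Set Ω := fun n => ⋂ k ∈ Finset.range n, X k ⁻¹' Set.Iio (u n) with hGdef
  set Pn : ℕ → Finset (ℕ × ℕ) := fun n =>
    (Finset.range (n+1) ×ˢ Finset.range (n+1)).filter
      (fun p => p.1 < p.2 ∧ a * y n < (p.2 : ℝ) - (p.1 : ℝ)) with hPndef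
  set S : ℕ → ℕ × ℕ → Set Ω := fun n p =>
    {ω | u n * Real.sqrt ((p.2 : ℝ) - (p.1 : ℝ)) ≤ pSum X p.2 ω - pSum X p.1 ω} with hSdef
  set Bad : ℕ → Set Ω := fun n => ⋃ p ∈ Pn n, S n p with hBaddef
  have hpm : ∀ m, Measurable (fun ω => pSum X m ω) :=
    fun m => Finset.measurable_sum _ (fun k _ => hmeas k)
  have hGmeas : ∀ n, MeasurableSet (G n) :=
    fun n => Finset.measurableSet_biInter _ (fun k _ => (hmeas k) measurableSet_Iio)
  have hBadmeas : ∀ n, MeasurableSet (Bad n) :=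
    fun n => Finset.measurableSet_biUnion _
      (fun p _ => measurableSet_le measurable_const ((hpm p.2).sub (hpm p.1)))
  set δG : ℕ → ℝ := fun n => (ℙ (G n)).toReal with hδGdef
  set δB : ℕ → ℝ := fun n => (ℙ (Bad n)).toReal with hδBdef
  -- eventual conditions
  have hev1 : ∀ᶠ n : ℕ in atTop, x₀ ≤ u n :=
    ((rpow_half_comp β hβ0).comp hy).eventually_ge_atTop x₀
  have hev2 : ∀ᶠ n : ℕ in atTop, 2 ≤ y n := hy.eventually_ge_atTop 2
  have hev3 : ∀ᶠ n : ℕ in atTop, 1 ≤ a * y n :=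
    (hy.const_mul_atTop ha).eventually_ge_atTop 1
  have hev4 : ∀ᶠ n : ℕ in atTop, 12 * K ≤ ((y n / 2) ^ β) ^ 2 / y n :=
    ((helper_sq β hβ).comp hy).eventually_ge_atTop (12 * K)
  have hev5 : ∀ᶠ n : ℕ in atTop,
      6 / (t₀ / 2 * Real.sqrt a) ≤ (y n / 2) ^ β * Real.sqrt (y n) / y n :=
    ((helper_sqrt β hβ).comp hy).eventually_ge_atTop _
  have hev6 : ∀ᶠ n : ℕ in atTop, 1 ≤ n := eventually_ge_atTop 1
  -- bound on δG
  have hGbound : ∀ᶠ n : ℕ in atTop, δG n ≤ Real.exp (-(Real.exp (y n / 2))) := by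
    filter_upwards [hev1, hev2, hev6] with n h1 h2 h6
    have hnpos : (0:ℝ) < n := by exact_mod_cast h6
    have hrtail : Real.exp (-((u n) ^ α)) < (ℙ {ω | u n < X 0 ω}).toReal := htail (u n) h1
    have hβα : β * α = 1 := by
      rw [hβdef]; field_simp
    have hbase : (0:ℝ) ≤ y n / 2 := by linarith
    have huα : (u n) ^ α = y n / 2 := by
      have h0 : (u n) ^ α = ((y n / 2) ^ β) ^ α := rfl
      rw [h0, ← Real.rpow_mul hbase, hβα, Real.rpow_one]
    have hgap := gap_event X hmeas hindep hident n (u n) (Real.exp (-((u n) ^ α)))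
      (Real.exp_pos _).le hrtail
    have hn_exp : (n:ℝ) = Real.exp (y n) := (Real.exp_log hnpos).symm
    calc δG n ≤ Real.exp (-((n:ℝ) * Real.exp (-((u n) ^ α)))) := hgap
      _ = Real.exp (-(Real.exp (y n / 2))) := by
          rw [huα]
          congr 1
          rw [hn_exp, ← Real.exp_add]
          congr 1
          ring
  have hGtend : Tendsto δG atTop (nhds 0) := by
    apply squeeze_zero' (Eventually.of_forall (fun n => ENNReal.toReal_nonneg)) hGbound
    have : Tendsto (fun n : ℕ => Real.exp (y n / 2)) atTop atTop :=
      Real.tendsto_exp_atTop.comp (hy.atTop_div_const two_pos)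
    exact Real.tendsto_exp_neg_atTop_nhds_zero.comp this
  -- bound on δB
  have hBbound : ∀ᶠ n : ℕ in atTop, δB n ≤ 4 / n := by
    filter_upwards [hev2, hev3, hev4, hev5, hev6] with n h2 h3 h4 h5 h6
    have hnpos : (0:ℝ) < n := by exact_mod_cast h6
    have hypos : (0:ℝ) < y n := by linarith
    -- per-pair bound
    have hpair : ∀ p ∈ Pn n, (ℙ (S n p)).toReal ≤ Real.exp (-(3 * y n)) := by
      intro p hp
      obtain ⟨hmemprod, hij, hlen⟩ := Finset.mem_filter.mp hp
      set L : ℝ := (p.2 : ℝ) - (p.1 : ℝ) with hLdef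
      have hL : 0 < L := by
        have : (1:ℝ) ≤ a * y n := h3
        linarith
      have hC1 : 12 * K * y n ≤ (u n) ^ 2 := by
        have := (le_div_iff₀ hypos).mp h4
        exact this
      have hC2 : 6 * y n ≤ t₀ / 2 * (u n * Real.sqrt L) := by
        have hca : (0:ℝ) < t₀ / 2 * Real.sqrt a := by positivity
        have step1 := (div_le_div_iff₀ hca hypos).mp h5
        -- step1 : 6 * y n ≤ (y n / 2) ^ β * Real.sqrt (y n) * (t₀ / 2 * Real.sqrt a)
        have hay : Real.sqrt (a * y n) = Real.sqrt a * Real.sqrt (y n) :=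
          Real.sqrt_mul ha.le _
        have hsa : Real.sqrt (a * y n) ≤ Real.sqrt L := Real.sqrt_le_sqrt hlen.le
        have hstep2 : t₀ / 2 * (u n * Real.sqrt (a * y n)) ≤
            t₀ / 2 * (u n * Real.sqrt L) := by
          apply mul_le_mul_of_nonneg_left _ (by positivity)
          exact mul_le_mul_of_nonneg_left hsa (hu0 n)
        have heq : t₀ / 2 * (u n * Real.sqrt (a * y n))
            = (y n / 2) ^ β * Real.sqrt (y n) * (t₀ / 2 * Real.sqrt a) := by
          rw [hay]
          have : u n = (y n / 2) ^ β := rfl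
          rw [this]
          ring
        linarith
      obtain ⟨t, ht0', htle, hexp⟩ := exp_choice K (t₀ / 2) (u n) L (y n)
        hK (by positivity) (hu0 n) hL hC1 hC2
      have htlt : t < t₀ := by linarith
      have hchern := block_chernoff X hmeas hindep hident t ht0'
        (hmgf t ht0' htlt) p.1 p.2 hij.le (u n * Real.sqrt L)
      have hcast : ((p.2 - p.1 : ℕ) : ℝ) = L := by
        rw [hLdef, Nat.cast_sub hij.le]
      have hcgft : cgf (X 0) ℙ t ≤ K * t ^ 2 := hcgf t ht0' htle
      calc (ℙ (S n p)).toReal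
          ≤ Real.exp (-t * (u n * Real.sqrt L) + ((p.2 - p.1 : ℕ) : ℝ) * cgf (X 0) ℙ t) :=
            hchern
        _ ≤ Real.exp (-(3 * y n)) := by
            apply Real.exp_le_exp.mpr
            rw [hcast]
            have : L * cgf (X 0) ℙ t ≤ L * (K * t ^ 2) :=
              mul_le_mul_of_nonneg_left hcgft hL.le
            linarith
    -- sum up
    have hsum_ne : (∑ p ∈ Pn n, ℙ (S n p)) ≠ ⊤ :=
      (ENNReal.sum_lt_top.mpr (fun _ _ => measure_lt_top _ _)).ne
    have hstep1 : δB n ≤ (∑ p ∈ Pn n, ℙ (S n p)).toReal :=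
      ENNReal.toReal_mono hsum_ne (measure_biUnion_finset_le _ _)
    have hstep2 : (∑ p ∈ Pn n, ℙ (S n p)).toReal = ∑ p ∈ Pn n, (ℙ (S n p)).toReal :=
      ENNReal.toReal_sum (fun _ _ => measure_ne_top _ _)
    have hstep3 : ∑ p ∈ Pn n, (ℙ (S n p)).toReal ≤
        (Pn n).card * Real.exp (-(3 * y n)) := by
      simpa using Finset.sum_le_card_nsmul _ _ _ hpair
    have hcard : ((Pn n).card : ℝ) ≤ ((n:ℝ) + 1) ^ 2 := by
      have h1 : (Pn n).card ≤ (n+1) * (n+1) := by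
        have := Finset.card_filter_le
          (Finset.range (n+1) ×ˢ Finset.range (n+1))
          (fun p => p.1 < p.2 ∧ a * y n < (p.2 : ℝ) - (p.1 : ℝ))
        simpa [Finset.card_product] using this
      calc ((Pn n).card : ℝ) ≤ ((n+1) * (n+1) : ℕ) := by exact_mod_cast h1
        _ = ((n:ℝ) + 1) ^ 2 := by push_cast; ring
    have hexp3 : Real.exp (-(3 * y n)) = (((n:ℝ)) ^ 3)⁻¹ := by
      rw [Real.exp_neg]
      congr 1
      rw [show (3:ℝ) * y n = ((3:ℕ):ℝ) * y n by norm_num, Real.exp_nat_mul,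
        Real.exp_log hnpos]
    have hfinal : ((n:ℝ) + 1) ^ 2 * (((n:ℝ)) ^ 3)⁻¹ ≤ 4 / n := by
      have hn1 : (1:ℝ) ≤ n := by exact_mod_cast h6
      rw [div_eq_mul_inv, show (4:ℝ) * ((n:ℝ))⁻¹ = 4 * (n:ℝ)^2 * ((n:ℝ)^3)⁻¹ by
        field_simp]
      apply mul_le_mul_of_nonneg_right _ (by positivity)
      nlinarith
    have hbound2 : ((Pn n).card : ℝ) * Real.exp (-(3 * y n)) ≤ 4 / n := by
      rw [hexp3]
      calc ((Pn n).card : ℝ) * (((n:ℝ)) ^ 3)⁻¹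
          ≤ ((n:ℝ) + 1) ^ 2 * (((n:ℝ)) ^ 3)⁻¹ :=
            mul_le_mul_of_nonneg_right hcard (by positivity)
        _ ≤ 4 / n := hfinal
    calc δB n ≤ ∑ p ∈ Pn n, (ℙ (S n p)).toReal := hstep2 ▸ hstep1
      _ ≤ (Pn n).card * Real.exp (-(3 * y n)) := hstep3
      _ ≤ 4 / n := hbound2
  have hBtend : Tendsto δB atTop (nhds 0) := by
    apply squeeze_zero' (Eventually.of_forall (fun n => ENNReal.toReal_nonneg)) hBbound
    exact tendsto_const_div_atTop_nhds_zero_nat 4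
  -- the main inclusion
  have hmain : ∀ᶠ n : ℕ in atTop,
      1 - (δG n + δB n) ≤
        (ℙ {ω | scanStat X n ω = scanStatR X n 1 (a * Real.log n) ω}).toReal := by
    filter_upwards [hev3] with n h3
    set Good : Set Ω := (G n)ᶜ ∩ (Bad n)ᶜ with hGooddef
    have hGoodmeas : MeasurableSet Good := (hGmeas n).compl.inter (hBadmeas n).compl
    have hsub : Good ⊆ {ω | scanStat X n ω = scanStatR X n 1 (a * Real.log n) ω} := by
      rintro ω ⟨hG, hB⟩
      have hshort : ∃ k, k < n ∧ u n ≤ X k ω := by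
        have hG' : ω ∉ G n := hG
        simp only [hGdef, Set.mem_iInter, Set.mem_preimage, Set.mem_Iio, not_forall,
          not_lt] at hG'
        obtain ⟨k, hk, hku⟩ := hG'
        exact ⟨k, Finset.mem_range.mp hk, hku⟩
      have hlong : ∀ i j : ℕ, i < j → j ≤ n → a * Real.log n < (j : ℝ) - (i : ℝ) →
          (pSum X j ω - pSum X i ω) / Real.sqrt ((j : ℝ) - (i : ℝ)) < u n := by
        intro i j hij hjn hlen
        have hpmem : (i, j) ∈ Pn n := by
          rw [hPndef]
          refine Finset.mem_filter.mpr ⟨Finset.mem_product.mpr ⟨?_, ?_⟩, hij, hlen⟩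
          · exact Finset.mem_range.mpr (lt_of_lt_of_le hij (Nat.le_succ_of_le hjn))
          · exact Finset.mem_range.mpr (Nat.lt_succ_of_le hjn)
        have hB' : ω ∉ Bad n := hB
        have hnotin : ω ∉ S n (i, j) := fun hmem => hB' (Set.mem_biUnion hpmem hmem)
        have hlt : pSum X j ω - pSum X i ω < u n * Real.sqrt ((j : ℝ) - (i : ℝ)) := by
          by_contra hc
          exact hnotin (not_lt.mp hc)
        have hsqrt : 0 < Real.sqrt ((j : ℝ) - (i : ℝ)) := by
          apply Real.sqrt_pos.mpr
          linarith
        rw [div_lt_iff₀ hsqrt]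
        linarith [hlt]
      exact scan_eq X n (a * Real.log n) (u n) h3 ω hshort hlong
    have h4 : (ℙ Good).toReal ≤
        (ℙ {ω | scanStat X n ω = scanStatR X n 1 (a * Real.log n) ω}).toReal :=
      ENNReal.toReal_mono (measure_ne_top _ _) (measure_mono hsub)
    have hcompl : Goodᶜ = G n ∪ Bad n := by
      rw [hGooddef, Set.compl_inter, compl_compl, compl_compl]
    have h1 : ℙ Goodᶜ ≤ ℙ (G n) + ℙ (Bad n) := by
      rw [hcompl]
      exact measure_union_le _ _
    have h1' : (ℙ Goodᶜ).toReal ≤ δG n + δB n := by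
      refine le_trans (ENNReal.toReal_mono ?_ h1) ?_
      · exact (ENNReal.add_lt_top.mpr ⟨measure_lt_top _ _, measure_lt_top _ _⟩).ne
      · rw [ENNReal.toReal_add (measure_ne_top _ _) (measure_ne_top _ _)]
    have h2' : (ℙ Good).toReal + (ℙ Goodᶜ).toReal = 1 := by
      have := prob_add_prob_compl (μ := (ℙ : Measure Ω)) hGoodmeas
      have h := congrArg ENNReal.toReal this
      rwa [ENNReal.toReal_add (measure_ne_top _ _) (measure_ne_top _ _),
        ENNReal.toReal_one] at h
    linarith
  have hupper : ∀ n : ℕ,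
      (ℙ {ω | scanStat X n ω = scanStatR X n 1 (a * Real.log n) ω}).toReal ≤ 1 := by
    intro n
    have := ENNReal.toReal_mono ENNReal.one_ne_top
      (prob_le_one (μ := (ℙ : Measure Ω))
        (s := {ω | scanStat X n ω = scanStatR X n 1 (a * Real.log n) ω}))
    simpa using this
  have hlow : Tendsto (fun n : ℕ => 1 - (δG n + δB n)) atTop (nhds 1) := by
    have := (tendsto_const_nhds (x := (1:ℝ)) (f := atTop)).sub (hGtend.add hBtend)
    simpa using this
  exact tendsto_of_tendsto_of_tendsto_of_le_of_le' hlow tendsto_const_nhds hmain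
    (Eventually.of_forall hupper)

end
end

section
/- Fix p ∈ (1/2, 1) and let σ = √(4p(1−p)). Let φ(t) = −(2pt)/σ + log(1 + p e^{2t/σ} − p) be the cumulant generating function of the standardized Bernoulli variable X = (Y − (2p−1))/σ, where P[Y = 1] = p, P[Y = −1] = 1−p. Then φ(t) < t²/2 for all t > 0. -/
/-- **Proposition 1.10 (non-symmetric Bernoulli, `p ∈ (1/2,1)`).**
Let `σ = √(4p(1-p))` and let
`φ(t) = -(2pt)/σ + log(1 + p e^{2t/σ} - p)` be the cumulant generating function of the
standardized Bernoulli variable `X = (Y - (2p-1))/σ` with `P[Y=1]=p`, `P[Y=-1]=1-p`.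
Then `φ(t) < t²/2` for all `t > 0`. -/
theorem bernoulli_superlogarithmic (p : ℝ) (hp1 : 1 / 2 < p) (hp2 : p < 1)
    (σ : ℝ) (hσ : σ = Real.sqrt (4 * p * (1 - p)))
    (φ : ℝ → ℝ)
    (hφ : ∀ t : ℝ, φ t = -(2 * p * t) / σ + Real.log (1 + p * Real.exp (2 * t / σ) - p)) :
    ∀ t : ℝ, 0 < t → φ t < t ^ 2 / 2 := by
  have hp0 : 0 < p := by linarith
  have hq0 : 0 < 1 - p := by linarith
  have hσpos : 0 < σ := by
    rw [hσ]; apply Real.sqrt_pos.mpr; positivity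
  have hσ2 : σ ^ 2 = 4 * p * (1 - p) := by
    rw [hσ, Real.sq_sqrt]; positivity
  set c : ℝ := 2 / σ with hc
  have hcpos : 0 < c := by positivity
  have hc2 : p * (1 - p) * c ^ 2 = 1 := by
    have h : c ^ 2 = 4 / σ ^ 2 := by rw [hc]; ring
    rw [h, hσ2]; field_simp
  set g : ℝ → ℝ := fun t => 1 - p + p * Real.exp (c * t) with hg
  have hgpos : ∀ t, 0 < g t := by
    intro t
    have := Real.exp_pos (c * t)
    simp only [hg]; positivity
  set F : ℝ → ℝ := fun t => t ^ 2 / 2 + p * c * t - Real.log (g t) with hF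
  set F' : ℝ → ℝ := fun t => t + p * c - p * c * Real.exp (c * t) / g t with hF'
  have hgderiv : ∀ t, HasDerivAt g (p * c * Real.exp (c * t)) t := by
    intro t
    have h1 : HasDerivAt (fun t : ℝ => c * t) c t := by
      simpa using (hasDerivAt_id t).const_mul c
    have h2 := (Real.hasDerivAt_exp (c * t)).comp t h1
    have h3 := (h2.const_mul p).const_add (1 - p)
    exact h3.congr_deriv (by ring)
  have hFderiv : ∀ t, HasDerivAt F (F' t) t := by
    intro t
    have h1 : HasDerivAt (fun t : ℝ => t ^ 2 / 2 + p * c * t) (t + p * c) t := by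
      have := ((hasDerivAt_pow 2 t).div_const 2).add ((hasDerivAt_id t).const_mul (p * c))
      exact this.congr_deriv (by norm_num)
    have h2 : HasDerivAt (fun t => Real.log (g t)) (p * c * Real.exp (c * t) / g t) t :=
      (hgderiv t).log (ne_of_gt (hgpos t))
    exact h1.sub h2
  have hF'deriv : ∀ t, HasDerivAt F' (1 - Real.exp (c * t) / (g t) ^ 2) t := by
    intro t
    have h1 : HasDerivAt (fun t : ℝ => t + p * c) 1 t := by
      simpa using (hasDerivAt_id t).add_const (p * c)
    have hexp : HasDerivAt (fun t : ℝ => p * c * Real.exp (c * t))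
        (p * c * (c * Real.exp (c * t))) t := by
      have hinner : HasDerivAt (fun t : ℝ => c * t) c t := by
        simpa using (hasDerivAt_id t).const_mul c
      have := (Real.hasDerivAt_exp (c * t)).comp t hinner
      have := this.const_mul (p * c)
      exact this.congr_deriv (by ring)
    have h2 := hexp.div (hgderiv t) (ne_of_gt (hgpos t))
    have h3 := h1.sub h2
    refine h3.congr_deriv ?_
    have hgt := hgpos t
    have hgval : g t = 1 - p + p * Real.exp (c * t) := rfl
    rw [hgval] at hgt ⊢
    field_simp
    nlinarith [hc2, Real.exp_pos (c * t), sq_nonneg (1 - p + p * Real.exp (c * t)),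
      mul_pos hgt hgt]
  have hF''pos : ∀ t, 0 < t → 0 < 1 - Real.exp (c * t) / (g t) ^ 2 := by
    intro t ht
    have hu : 1 < Real.exp (c * t) := by
      rw [← Real.exp_zero]
      exact Real.exp_lt_exp.mpr (by positivity)
    set u := Real.exp (c * t) with hu'
    have hgval : g t = 1 - p + p * u := rfl
    have key : u < (g t) ^ 2 := by
      rw [hgval]
      nlinarith [mul_pos (sub_pos.mpr hu) (show (0:ℝ) < p^2 * u - (1-p)^2 by nlinarith)]
    have := hgpos t
    rw [sub_pos, div_lt_one (by positivity)]
    exact key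
  -- F' is strictly monotone on [0, ∞)
  have hF'mono : StrictMonoOn F' (Set.Ici 0) := by
    apply strictMonoOn_of_deriv_pos (convex_Ici 0)
    · exact fun t _ => (hF'deriv t).differentiableAt.continuousAt.continuousWithinAt
    · intro t ht
      rw [interior_Ici] at ht
      rw [(hF'deriv t).deriv]
      exact hF''pos t ht
  have hF'0 : F' 0 = 0 := by
    simp only [hF', hg]
    simp [Real.exp_zero]
  have hF'pos : ∀ t, 0 < t → 0 < F' t := by
    intro t ht
    rw [← hF'0]
    exact hF'mono (Set.self_mem_Ici) (le_of_lt ht) ht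
  have hFmono : StrictMonoOn F (Set.Ici 0) := by
    apply strictMonoOn_of_deriv_pos (convex_Ici 0)
    · exact fun t _ => (hFderiv t).differentiableAt.continuousAt.continuousWithinAt
    · intro t ht
      rw [interior_Ici] at ht
      rw [(hFderiv t).deriv]
      exact hF'pos t ht
  have hF0 : F 0 = 0 := by
    simp only [hF, hg]
    simp [Real.exp_zero]
  intro t ht
  have hFt : 0 < F t := by
    rw [← hF0]
    exact hFmono (Set.self_mem_Ici) (le_of_lt ht) ht
  have hct : c * t = 2 * t / σ := by rw [hc]; ring
  have hpct : p * c * t = 2 * p * t / σ := by rw [hc]; ring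
  have hφt : φ t = -(p * c * t) + Real.log (g t) := by
    rw [hφ t, hg]
    simp only [hct, hpct]
    ring_nf
  rw [hφt]
  have hFt' : 0 < t ^ 2 / 2 + p * c * t - Real.log (g t) := hFt
  linarith
end

section
/- Fix d ∈ ℕ and, for B ∈ ℕ, partition ℤ^d into disjoint discrete cubes Bu + {0,…,B−1}^d, u ∈ ℤ^d; write v_1 ∼ v_2 if v_1, v_2 lie in the same cube of this partition, and let ∂_B V denote the union of those cubes having non-empty intersection with both V and ℤ^d \ V. Let 𝕍_n ⊂ ℤ^d be a sequence of finite sets such that for every B ∈ ℕ, |∂_B 𝕍_n| = o(|𝕍_n|) as n → ∞. Then for every ε > 0, lim_{B→∞} limsup_{n→∞} (1/|𝕍_n|) Σ_{v_1, v_2 ∈ 𝕍_n, v_1 ≁ v_2} e^{−ε ‖v_1 − v_2‖} = 0, where ‖·‖ is the sup-norm on ℝ^d. -/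
open Filter

noncomputable section

/-- `v` and `w` lie in the same cube `Bu + {0,…,B−1}^d` of the decomposition of `ℤ^d`
into discrete cubes of side length `B`. -/
def sameCube {d : ℕ} (B : ℕ) (v w : Fin d → ℤ) : Prop :=
  ∀ i : Fin d, Int.fdiv (v i) B = Int.fdiv (w i) B

instance {d : ℕ} (B : ℕ) (v w : Fin d → ℤ) : Decidable (sameCube B v w) := by
  unfold sameCube; infer_instance

/-- The `B`-boundary `∂_B V` of `V ⊆ ℤ^d`: the union of the cubes of the decomposition
which meet both `V` and its complement. -/
def cubeBoundary {d : ℕ} (B : ℕ) (V : Set (Fin d → ℤ)) : Set (Fin d → ℤ) :=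
  {w | (∃ v ∈ V, sameCube B w v) ∧ ∃ v ∉ V, sameCube B w v}

/-- The sup-norm of the difference of two lattice points, as a real number. -/
def supDist {d : ℕ} (v w : Fin d → ℤ) : ℝ :=
  ((Finset.univ.sup fun i : Fin d => (v i - w i).natAbs : ℕ) : ℝ)

private lemma geo_nat {q : ℝ} (h0 : 0 ≤ q) (h1 : q < 1) (t : Finset ℕ) :
    ∑ n ∈ t, q ^ n ≤ 1 / (1 - q) := by
  obtain ⟨N, hN⟩ := t.exists_nat_subset_range
  have h2 : (0:ℝ) < 1 - q := by linarith
  calc ∑ n ∈ t, q ^ n ≤ ∑ n ∈ Finset.range N, q ^ n :=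
        Finset.sum_le_sum_of_subset_of_nonneg hN (fun i _ _ => pow_nonneg h0 i)
    _ = (q ^ N - 1)/(q - 1) := geom_sum_eq (by linarith) N
    _ = (1 - q ^ N)/(1 - q) := by rw [← neg_div_neg_eq]; ring_nf
    _ ≤ 1 / (1 - q) := by
        rw [div_le_div_iff_of_pos_right h2]
        have := pow_nonneg h0 N; linarith

private lemma geo_int {q : ℝ} (h0 : 0 ≤ q) (h1 : q < 1) (a : ℤ) (s : Finset ℤ) :
    ∑ k ∈ s, q ^ (a - k).natAbs ≤ 2 / (1 - q) := by
  classical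
  have key : ∀ t : Finset ℤ, (∀ x ∈ t, ∀ y ∈ t, (a-x).natAbs = (a-y).natAbs → x = y) →
      ∑ k ∈ t, q ^ (a - k).natAbs ≤ 1/(1-q) := by
    intro t hinj
    rw [show (∑ k ∈ t, q ^ (a - k).natAbs)
        = ∑ n ∈ t.image (fun k => (a-k).natAbs), q ^ n from (Finset.sum_image hinj).symm]
    exact geo_nat h0 h1 _
  rw [← Finset.sum_filter_add_sum_filter_not s (fun k => k ≤ a)]
  have e2 : (2:ℝ)/(1-q) = 1/(1-q) + 1/(1-q) := by ring
  rw [e2]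
  gcongr ?_ + ?_
  · exact key _ (by intro x hx y hy h; simp only [Finset.mem_filter] at hx hy; omega)
  · exact key _ (by intro x hx y hy h; simp only [Finset.mem_filter] at hx hy; omega)

private lemma fdiv_eq_iff' {B : ℕ} (hB : 1 ≤ B) (k u : ℤ) :
    Int.fdiv k B = u ↔ (B:ℤ) * u ≤ k ∧ k < B * u + B := by
  have hB' : (0:ℤ) < B := by exact_mod_cast hB
  rw [Int.fdiv_eq_ediv_of_nonneg _ hB'.le]
  constructor
  · rintro rfl
    have h1 := Int.emod_nonneg k hB'.ne'
    have h2 := Int.emod_lt_of_pos k hB'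
    have h3 := Int.mul_ediv_add_emod k B
    constructor <;> linarith
  · rintro ⟨h1, h2⟩
    exact ((Int.ediv_emod_unique (a := k) (b := (B:ℤ)) (q := u) (r := k - (B:ℤ)*u) hB').mpr ⟨by ring, by linarith, by linarith⟩).1

private lemma key_dist {B : ℕ} (hB : 1 ≤ B) {k1 k2 : ℤ}
    (h : Int.fdiv k1 B ≠ Int.fdiv k2 B) :
    1 + min (k1 % (B:ℤ)).toNat (B - 1 - (k1 % (B:ℤ)).toNat) ≤ (k1 - k2).natAbs := by
  have hB' : (0:ℤ) < B := by exact_mod_cast hB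
  have h1 : (B:ℤ) * Int.fdiv k1 B ≤ k1 ∧ k1 < B * Int.fdiv k1 B + B :=
    (fdiv_eq_iff' hB k1 _).mp rfl
  have h2 : ¬((B:ℤ) * Int.fdiv k1 B ≤ k2 ∧ k2 < B * Int.fdiv k1 B + B) := by
    intro hc; exact h ((fdiv_eq_iff' hB k2 _).mpr hc).symm
  have hemod : k1 % (B:ℤ) = k1 - (B:ℤ) * Int.fdiv k1 B := by
    rw [Int.fdiv_eq_ediv_of_nonneg _ hB'.le, Int.emod_def]
  rw [hemod]
  generalize (B:ℤ) * Int.fdiv k1 B = x at h1 h2 ⊢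
  omega

private def latCube {d : ℕ} (B : ℕ) (u : Fin d → ℤ) : Finset (Fin d → ℤ) :=
  Fintype.piFinset fun i => Finset.Icc ((B:ℤ) * u i) ((B:ℤ) * u i + B - 1)

private lemma mem_latCube {d B : ℕ} (hB : 1 ≤ B) (u v : Fin d → ℤ) :
    v ∈ latCube B u ↔ ∀ i, Int.fdiv (v i) B = u i := by
  simp only [latCube, Fintype.mem_piFinset, Finset.mem_Icc]
  refine forall_congr' fun i => ?_
  rw [fdiv_eq_iff' hB]
  omega

private lemma card_latCube {d B : ℕ} (hB : 1 ≤ B) (u : Fin d → ℤ) :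
    (latCube B u).card = B ^ d := by
  rw [latCube, Fintype.card_piFinset]
  have : ∀ i : Fin d, (Finset.Icc ((B:ℤ) * u i) ((B:ℤ) * u i + B - 1)).card = B := by
    intro i; rw [Int.card_Icc]; omega
  simp [this]

private lemma piFinset_sum_coord {d : ℕ} (t : Fin d → Finset ℤ) (i : Fin d) (g : ℤ → ℝ) :
    ∑ v ∈ Fintype.piFinset t, g (v i)
      = (∑ k ∈ t i, g k) * ∏ j ∈ Finset.univ.erase i, ((t j).card : ℝ) := by
  classical
  have h := Finset.prod_univ_sum t (fun j k => if j = i then g k else 1)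
  have hL : (∏ j, ∑ k ∈ t j, if j = i then g k else 1)
      = (∑ k ∈ t i, g k) * ∏ j ∈ Finset.univ.erase i, ((t j).card : ℝ) := by
    rw [← Finset.mul_prod_erase Finset.univ _ (Finset.mem_univ i)]
    simp only [if_pos rfl]
    congr 1
    refine Finset.prod_congr rfl fun j hj => ?_
    rw [Finset.mem_erase] at hj
    simp [hj.1]
  have hR : (∑ v ∈ Fintype.piFinset t, ∏ j, if j = i then g (v j) else 1)
      = ∑ v ∈ Fintype.piFinset t, g (v i) := by
    refine Finset.sum_congr rfl fun v _ => ?_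
    simp [Finset.prod_ite_eq']
  rw [← hR, ← h, hL]

private lemma oneD_sum {B : ℕ} (hB : 1 ≤ B) {Q : ℝ} (h0 : 0 ≤ Q) (h1 : Q < 1) (c : ℤ) :
    ∑ k ∈ Finset.Icc ((B:ℤ) * c) ((B:ℤ) * c + B - 1),
        Q ^ (1 + min (k % (B:ℤ)).toNat (B - 1 - (k % (B:ℤ)).toNat)) ≤ 2 / (1 - Q) := by
  have hB' : (0:ℤ) < B := by exact_mod_cast hB
  have himg : Finset.Icc ((B:ℤ) * c) ((B:ℤ) * c + B - 1)
      = (Finset.range B).image (fun a : ℕ => (B:ℤ) * c + a) := by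
    ext k
    simp only [Finset.mem_Icc, Finset.mem_image, Finset.mem_range]
    constructor
    · intro hk; exact ⟨(k - (B:ℤ)*c).toNat, by omega, by omega⟩
    · rintro ⟨a, ha, rfl⟩; omega
  rw [himg, Finset.sum_image (by intro x _ y _ h; simp only at h; omega)]
  have hmod : ∀ a ∈ Finset.range B, ((((B:ℤ) * c + a) % (B:ℤ))).toNat = a := by
    intro a ha
    rw [Finset.mem_range] at ha
    rw [add_comm, Int.add_mul_emod_self_left, Int.emod_eq_of_lt (by positivity) (by exact_mod_cast ha)]
    exact Int.toNat_natCast a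
  calc ∑ a ∈ Finset.range B, Q ^ (1 + min ((((B:ℤ)*c + a) % (B:ℤ)).toNat) (B - 1 - (((B:ℤ)*c + a) % (B:ℤ)).toNat))
      = ∑ a ∈ Finset.range B, Q ^ (1 + min a (B - 1 - a)) :=
        Finset.sum_congr rfl (fun a ha => by rw [hmod a ha])
    _ ≤ ∑ a ∈ Finset.range B, (Q ^ a + Q ^ (B - 1 - a)) := by
        refine Finset.sum_le_sum fun a ha => ?_
        rcases le_total a (B - 1 - a) with hle | hle
        · have : Q ^ (1 + min a (B - 1 - a)) ≤ Q ^ a := by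
            apply pow_le_pow_of_le_one h0 h1.le; omega
          have h2 : 0 ≤ Q ^ (B - 1 - a) := pow_nonneg h0 _
          linarith
        · have : Q ^ (1 + min a (B - 1 - a)) ≤ Q ^ (B - 1 - a) := by
            apply pow_le_pow_of_le_one h0 h1.le; omega
          have h2 : 0 ≤ Q ^ a := pow_nonneg h0 _
          linarith
    _ = ∑ a ∈ Finset.range B, Q ^ a + ∑ a ∈ Finset.range B, Q ^ (B - 1 - a) :=
        Finset.sum_add_distrib
    _ = ∑ a ∈ Finset.range B, Q ^ a + ∑ a ∈ Finset.range B, Q ^ a := by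
        rw [Finset.sum_range_reflect (fun a => Q ^ a) B]
    _ ≤ 1/(1-Q) + 1/(1-Q) := by
        have := geo_nat h0 h1 (Finset.range B); linarith
    _ = 2/(1-Q) := by ring

private lemma cube_sum {d B : ℕ} (hB : 1 ≤ B) {Q : ℝ} (h0 : 0 ≤ Q) (h1 : Q < 1)
    (u : Fin d → ℤ) :
    ∑ v ∈ latCube B u, ∑ i : Fin d,
        Q ^ (1 + min ((v i % (B:ℤ)).toNat) (B - 1 - (v i % (B:ℤ)).toNat))
      ≤ (d : ℝ) * (B:ℝ) ^ (d - 1) * (2 / (1 - Q)) := by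
  have hQpos : (0:ℝ) < 1 - Q := by linarith
  rw [Finset.sum_comm]
  have hcard : ∀ j : Fin d, ((Finset.Icc ((B:ℤ) * u j) ((B:ℤ) * u j + B - 1)).card : ℝ) = B := by
    intro j
    rw [Int.card_Icc, show (B:ℤ) * u j + B - 1 + 1 - (B:ℤ) * u j = (B:ℤ) from by ring]
    simp
  have hone : ∀ i : Fin d,
      ∑ v ∈ latCube B u, Q ^ (1 + min ((v i % (B:ℤ)).toNat) (B - 1 - (v i % (B:ℤ)).toNat))
        ≤ (B:ℝ) ^ (d - 1) * (2 / (1 - Q)) := by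
    intro i
    rw [latCube, piFinset_sum_coord (g := fun k =>
        Q ^ (1 + min ((k % (B:ℤ)).toNat) (B - 1 - (k % (B:ℤ)).toNat)))]
    have hprod : ∏ j ∈ Finset.univ.erase i,
        ((Finset.Icc ((B:ℤ) * u j) ((B:ℤ) * u j + B - 1)).card : ℝ) = (B:ℝ) ^ (d - 1) := by
      rw [Finset.prod_congr rfl (fun j _ => hcard j), Finset.prod_const,
        Finset.card_erase_of_mem (Finset.mem_univ i), Finset.card_univ, Fintype.card_fin]
    rw [hprod]
    have h2 := oneD_sum hB h0 h1 (u i)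
    have hb : (0:ℝ) ≤ (B:ℝ) ^ (d - 1) := by positivity
    have hsumnn : (0:ℝ) ≤ ∑ k ∈ Finset.Icc ((B:ℤ) * u i) ((B:ℤ) * u i + B - 1),
        Q ^ (1 + min ((k % (B:ℤ)).toNat) (B - 1 - (k % (B:ℤ)).toNat)) :=
      Finset.sum_nonneg fun k _ => pow_nonneg h0 _
    calc _ ≤ (2/(1-Q)) * (B:ℝ) ^ (d-1) := by
          apply mul_le_mul_of_nonneg_right h2 hb
      _ = (B:ℝ) ^ (d - 1) * (2 / (1 - Q)) := by ring
  calc ∑ i : Fin d, ∑ v ∈ latCube B u,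
        Q ^ (1 + min ((v i % (B:ℤ)).toNat) (B - 1 - (v i % (B:ℤ)).toNat))
      ≤ ∑ _i : Fin d, (B:ℝ) ^ (d - 1) * (2 / (1 - Q)) := Finset.sum_le_sum fun i _ => hone i
    _ = (d : ℝ) * (B:ℝ) ^ (d - 1) * (2 / (1 - Q)) := by
        rw [Finset.sum_const, Finset.card_univ, Fintype.card_fin]; ring

private lemma pointwise_bound {d B : ℕ} (hd : 0 < d) (hB : 1 ≤ B) {ε : ℝ} (hε : 0 < ε)
    {v w : Fin d → ℤ} (h : ¬ sameCube B v w) :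
    Real.exp (-ε * supDist v w) ≤
      (∑ i : Fin d, Real.exp (-(ε/2)) ^ (1 + min ((v i % (B:ℤ)).toNat) (B - 1 - (v i % (B:ℤ)).toNat)))
        * ∏ i : Fin d, Real.exp (-(ε/(2*d))) ^ ((v i - w i).natAbs) := by
  obtain ⟨i0, hi0⟩ := not_forall.mp h
  set Q := Real.exp (-(ε/2)) with hQdef
  set q := Real.exp (-(ε/(2*d))) with hqdef
  set N := Finset.univ.sup (fun i : Fin d => (v i - w i).natAbs) with hNdef
  set m := 1 + min ((v i0 % (B:ℤ)).toNat) (B - 1 - (v i0 % (B:ℤ)).toNat) with hmdef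
  have hsupd : supDist v w = (N : ℝ) := rfl
  have hmN : m ≤ N := (key_dist hB hi0).trans (Finset.le_sup (f := fun i : Fin d => (v i - w i).natAbs) (Finset.mem_univ i0))
  have hsumN : ∑ i : Fin d, ((v i - w i).natAbs) ≤ d * N := by
    calc ∑ i : Fin d, ((v i - w i).natAbs) ≤ Finset.univ.card • N :=
          Finset.sum_le_card_nsmul _ _ _ (fun i _ => Finset.le_sup (f := fun i : Fin d => (v i - w i).natAbs) (Finset.mem_univ i))
      _ = d * N := by rw [Finset.card_univ, Fintype.card_fin, smul_eq_mul]
  have hsplit : Real.exp (-ε * supDist v w)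
      = Real.exp (-(ε/2) * N) * Real.exp (-(ε/2) * N) := by
    rw [hsupd, ← Real.exp_add]; ring_nf
  have hb1 : Real.exp (-(ε/2) * N) ≤ Q ^ m := by
    rw [hQdef, ← Real.exp_nat_mul]
    apply Real.exp_le_exp.mpr
    have hc : (m : ℝ) ≤ (N : ℝ) := by exact_mod_cast hmN
    nlinarith
  have hb2 : Real.exp (-(ε/2) * N) ≤ ∏ i : Fin d, q ^ ((v i - w i).natAbs) := by
    have hprod : ∏ i : Fin d, q ^ ((v i - w i).natAbs)
        = Real.exp (∑ i : Fin d, ((v i - w i).natAbs : ℝ) * (-(ε/(2*d)))) := by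
      rw [Real.exp_sum]
      exact Finset.prod_congr rfl fun i _ => by rw [hqdef, Real.exp_nat_mul]
    rw [hprod]
    apply Real.exp_le_exp.mpr
    have hc : (∑ i : Fin d, ((v i - w i).natAbs : ℝ)) ≤ (d : ℝ) * N := by exact_mod_cast hsumN
    have hd' : (0:ℝ) < d := by exact_mod_cast hd
    rw [← Finset.sum_mul]
    have heq : (ε/(2*d)) * ((d:ℝ) * N) = (ε/2) * N := by field_simp
    nlinarith [mul_le_mul_of_nonneg_left hc (le_of_lt (by positivity : (0:ℝ) < ε/(2*d)))]
  calc Real.exp (-ε * supDist v w) = Real.exp (-(ε/2) * N) * Real.exp (-(ε/2) * N) := hsplit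
    _ ≤ (Q ^ m) * ∏ i : Fin d, q ^ ((v i - w i).natAbs) := by
        apply mul_le_mul hb1 hb2 (Real.exp_nonneg _)
        positivity
    _ ≤ _ := by
        apply mul_le_mul_of_nonneg_right ?_ (Finset.prod_nonneg fun i _ => by positivity)
        exact Finset.single_le_sum (f := fun i : Fin d => Q ^ (1 + min ((v i % (B:ℤ)).toNat) (B - 1 - (v i % (B:ℤ)).toNat)))
          (fun i _ => by positivity) (Finset.mem_univ i0)

private lemma innerSum_bound {d B : ℕ} (hd : 0 < d) (hB : 1 ≤ B) {ε : ℝ} (hε : 0 < ε)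
    (V : Finset (Fin d → ℤ)) (v : Fin d → ℤ) :
    ∑ w ∈ V, (if sameCube B v w then 0 else Real.exp (-ε * supDist v w))
      ≤ (∑ i : Fin d, Real.exp (-(ε/2)) ^ (1 + min ((v i % (B:ℤ)).toNat) (B - 1 - (v i % (B:ℤ)).toNat)))
          * (2 / (1 - Real.exp (-(ε/(2*d)))))^d := by
  classical
  set q := Real.exp (-(ε/(2*d))) with hqdef
  set Q := Real.exp (-(ε/2)) with hQdef
  have hq0 : 0 < q := Real.exp_pos _
  have hq1 : q < 1 := by
    rw [hqdef]
    apply Real.exp_lt_one_iff.mpr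
    have : (0:ℝ) < d := by exact_mod_cast hd
    have : (0:ℝ) < ε/(2*d) := by positivity
    linarith
  set F := ∑ i : Fin d, Q ^ (1 + min ((v i % (B:ℤ)).toNat) (B - 1 - (v i % (B:ℤ)).toNat)) with hFdef
  have hF0 : 0 ≤ F := Finset.sum_nonneg fun i _ => by positivity
  have step1 : ∑ w ∈ V, (if sameCube B v w then 0 else Real.exp (-ε * supDist v w))
      ≤ ∑ w ∈ V, F * ∏ i : Fin d, q ^ ((v i - w i).natAbs) := by
    refine Finset.sum_le_sum fun w _ => ?_
    by_cases hsw : sameCube B v w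
    · rw [if_pos hsw]
      exact mul_nonneg hF0 (Finset.prod_nonneg fun i _ => by positivity)
    · rw [if_neg hsw]
      exact pointwise_bound hd hB hε hsw
  have step2 : ∑ w ∈ V, F * ∏ i : Fin d, q ^ ((v i - w i).natAbs)
      = F * ∑ w ∈ V, ∏ i : Fin d, q ^ ((v i - w i).natAbs) := by
    rw [Finset.mul_sum]
  set t : Fin d → Finset ℤ := fun i => V.image (fun x => x i) with htdef
  have hsub : V ⊆ Fintype.piFinset t := by
    intro w hw
    rw [Fintype.mem_piFinset]
    exact fun i => Finset.mem_image_of_mem _ hw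
  have step3 : ∑ w ∈ V, ∏ i : Fin d, q ^ ((v i - w i).natAbs)
      ≤ ∑ w ∈ Fintype.piFinset t, ∏ i : Fin d, q ^ ((v i - w i).natAbs) :=
    Finset.sum_le_sum_of_subset_of_nonneg hsub
      (fun w _ _ => Finset.prod_nonneg fun i _ => by positivity)
  have step4 : ∑ w ∈ Fintype.piFinset t, ∏ i : Fin d, q ^ ((v i - w i).natAbs)
      = ∏ i : Fin d, ∑ k ∈ t i, q ^ ((v i - k).natAbs) :=
    (Finset.prod_univ_sum t (fun i k => q ^ ((v i - k).natAbs))).symm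
  have step5 : ∏ i : Fin d, ∑ k ∈ t i, q ^ ((v i - k).natAbs) ≤ (2 / (1 - q))^d := by
    calc ∏ i : Fin d, ∑ k ∈ t i, q ^ ((v i - k).natAbs)
        ≤ ∏ _i : Fin d, (2 / (1 - q)) := by
          apply Finset.prod_le_prod
          · exact fun i _ => Finset.sum_nonneg fun k _ => by positivity
          · exact fun i _ => geo_int hq0.le hq1 (v i) (t i)
      _ = (2 / (1 - q))^d := by
          rw [Finset.prod_const, Finset.card_univ, Fintype.card_fin]
  calc ∑ w ∈ V, (if sameCube B v w then 0 else Real.exp (-ε * supDist v w))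
      ≤ F * ∑ w ∈ V, ∏ i : Fin d, q ^ ((v i - w i).natAbs) := step1.trans step2.le
    _ ≤ F * (2 / (1 - q))^d := by
        apply mul_le_mul_of_nonneg_left ((step3.trans step4.le).trans step5) hF0

private lemma boundary_finite {d B : ℕ} (hB : 1 ≤ B) (V : Finset (Fin d → ℤ)) :
    (cubeBoundary B (↑V : Set (Fin d → ℤ))).Finite := by
  classical
  apply Set.Finite.subset
    (Finset.finite_toSet (V.biUnion fun v => latCube B (fun i => Int.fdiv (v i) B)))
  rintro w ⟨⟨v, hv, hs⟩, -⟩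
  simp only [Finset.coe_biUnion, Set.mem_iUnion, Finset.mem_coe]
  exact ⟨v, hv, (mem_latCube hB _ w).mpr hs⟩

private lemma T_bound {d B : ℕ} (hd : 0 < d) (hB : 1 ≤ B) {Q : ℝ} (h0 : 0 ≤ Q) (h1 : Q < 1)
    (V : Finset (Fin d → ℤ)) :
    ∑ v ∈ V, (∑ i : Fin d, Q ^ (1 + min ((v i % (B:ℤ)).toNat) (B - 1 - (v i % (B:ℤ)).toNat)))
      ≤ (d:ℝ) * ((cubeBoundary B (↑V : Set (Fin d → ℤ))).ncard : ℝ)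
        + ((V.card : ℝ) / B) * ((d:ℝ) * (2/(1-Q))) := by
  classical
  set φ : (Fin d → ℤ) → (Fin d → ℤ) := fun v i => Int.fdiv (v i) B with hφ
  set F : (Fin d → ℤ) → ℝ :=
    fun v => ∑ i : Fin d, Q ^ (1 + min ((v i % (B:ℤ)).toNat) (B - 1 - (v i % (B:ℤ)).toNat)) with hF
  have hF0 : ∀ v, 0 ≤ F v := fun v => Finset.sum_nonneg fun i _ => by positivity
  have hFd : ∀ v, F v ≤ (d:ℝ) := by
    intro v
    calc F v ≤ ∑ _i : Fin d, (1:ℝ) :=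
          Finset.sum_le_sum fun i _ => pow_le_one₀ h0 h1.le
      _ = (d:ℝ) := by simp
  set P : (Fin d → ℤ) → Prop := fun v => latCube B (φ v) ⊆ V with hP
  rw [← Finset.sum_filter_add_sum_filter_not V P F]
  have part2 : ∑ v ∈ V.filter (fun v => ¬ P v), F v
      ≤ (d:ℝ) * ((cubeBoundary B (↑V : Set (Fin d → ℤ))).ncard : ℝ) := by
    have hsub : ↑(V.filter (fun v => ¬ P v)) ⊆ cubeBoundary B (↑V : Set (Fin d → ℤ)) := by
      intro v hv
      simp only [Finset.coe_filter, Set.mem_setOf_eq] at hv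
      obtain ⟨hvV, hnP⟩ := hv
      rw [hP, Finset.not_subset] at hnP
      obtain ⟨w, hwcube, hwV⟩ := hnP
      refine ⟨⟨v, hvV, fun i => rfl⟩, ⟨w, by simpa using hwV, fun i => ?_⟩⟩
      exact ((mem_latCube hB _ w).mp hwcube i).symm
    have hcard : ((V.filter (fun v => ¬ P v)).card : ℝ)
        ≤ ((cubeBoundary B (↑V : Set (Fin d → ℤ))).ncard : ℝ) := by
      have := Set.ncard_le_ncard hsub (boundary_finite hB V)
      rw [Set.ncard_coe_finset] at this
      exact_mod_cast this
    calc ∑ v ∈ V.filter (fun v => ¬ P v), F v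
        ≤ ∑ _v ∈ V.filter (fun v => ¬ P v), (d:ℝ) := Finset.sum_le_sum fun v _ => hFd v
      _ = ((V.filter (fun v => ¬ P v)).card : ℝ) * d := by rw [Finset.sum_const]; ring
      _ ≤ _ := by
          rw [mul_comm]
          exact mul_le_mul_of_nonneg_left hcard (by positivity)
  have part1 : ∑ v ∈ V.filter P, F v ≤ ((V.card : ℝ) / B) * ((d:ℝ) * (2/(1-Q))) := by
    set S1 := V.filter P with hS1
    set I := S1.image φ with hI
    have hfib : ∑ u ∈ I, ∑ v ∈ S1.filter (fun v => φ v = u), F v = ∑ v ∈ S1, F v :=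
      Finset.sum_fiberwise_of_maps_to (fun x hx => Finset.mem_image_of_mem φ hx) F
    have hcubesub : ∀ u ∈ I, latCube B u ⊆ V := by
      intro u hu
      obtain ⟨v, hv, rfl⟩ := Finset.mem_image.mp hu
      exact (Finset.mem_filter.mp hv).2
    have hucube : ∀ u ∈ I, ∑ v ∈ S1.filter (fun v => φ v = u), F v
        ≤ (d : ℝ) * (B:ℝ) ^ (d - 1) * (2 / (1 - Q)) := by
      intro u hu
      have hsub2 : S1.filter (fun v => φ v = u) ⊆ latCube B u := by
        intro v hv
        obtain ⟨-, hvu⟩ := Finset.mem_filter.mp hv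
        exact (mem_latCube hB u v).mpr fun i => congrFun hvu i
      calc ∑ v ∈ S1.filter (fun v => φ v = u), F v ≤ ∑ v ∈ latCube B u, F v :=
            Finset.sum_le_sum_of_subset_of_nonneg hsub2 (fun v _ _ => hF0 v)
        _ ≤ (d : ℝ) * (B:ℝ) ^ (d - 1) * (2 / (1 - Q)) := cube_sum hB h0 h1 u
    have hcount : I.card * B ^ d ≤ V.card := by
      have hdisj : ∀ x ∈ I, ∀ y ∈ I, x ≠ y → Disjoint (latCube B x) (latCube B y) := by
        intro x _ y _ hxy
        rw [Finset.disjoint_left]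
        intro v hvx hvy
        apply hxy
        funext i
        rw [← (mem_latCube hB x v).mp hvx i, ← (mem_latCube hB y v).mp hvy i]
      have hbU : I.biUnion (latCube B) ⊆ V := Finset.biUnion_subset.mpr hcubesub
      have := Finset.card_le_card hbU
      rw [Finset.card_biUnion hdisj] at this
      calc I.card * B ^ d = ∑ u ∈ I, B ^ d := by rw [Finset.sum_const, smul_eq_mul]
        _ = ∑ u ∈ I, (latCube B u).card := by
            exact Finset.sum_congr rfl fun u _ => (card_latCube hB u).symm
        _ ≤ V.card := this
    have hcount' : (I.card : ℝ) * (B:ℝ) ^ (d - 1) ≤ (V.card : ℝ) / B := by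
      have hBpos : (0:ℝ) < B := by exact_mod_cast hB
      rw [le_div_iff₀ hBpos]
      have : (I.card : ℝ) * (B:ℝ) ^ (d - 1) * B = (I.card : ℝ) * (B:ℝ) ^ d := by
        rw [mul_assoc, ← pow_succ]
        congr 2
        omega
      rw [this]
      exact_mod_cast hcount
    calc ∑ v ∈ S1, F v = ∑ u ∈ I, ∑ v ∈ S1.filter (fun v => φ v = u), F v := hfib.symm
      _ ≤ ∑ _u ∈ I, (d : ℝ) * (B:ℝ) ^ (d - 1) * (2 / (1 - Q)) :=
          Finset.sum_le_sum hucube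
      _ = ((I.card : ℝ) * (B:ℝ) ^ (d - 1)) * ((d:ℝ) * (2 / (1 - Q))) := by
          rw [Finset.sum_const, nsmul_eq_mul]; ring
      _ ≤ ((V.card : ℝ) / B) * ((d:ℝ) * (2/(1-Q))) := by
          apply mul_le_mul_of_nonneg_right hcount'
          have h2 : (0:ℝ) < 1 - Q := by linarith
          positivity
  linarith [part1, part2]

private lemma main_bound {d B : ℕ} (hd : 0 < d) (hB : 1 ≤ B) {ε : ℝ} (hε : 0 < ε)
    (V : Finset (Fin d → ℤ)) :
    ∑ v₁ ∈ V, ∑ v₂ ∈ V, (if sameCube B v₁ v₂ then 0 else Real.exp (-ε * supDist v₁ v₂))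
      ≤ (2 / (1 - Real.exp (-(ε/(2*d)))))^d *
          ((d:ℝ) * ((cubeBoundary B (↑V : Set (Fin d → ℤ))).ncard : ℝ)
            + ((V.card : ℝ) / B) * ((d:ℝ) * (2/(1 - Real.exp (-(ε/2)))))) := by
  classical
  set q := Real.exp (-(ε/(2*d))) with hqdef
  set Q := Real.exp (-(ε/2)) with hQdef
  have hd' : (0:ℝ) < d := by exact_mod_cast hd
  have hq1 : q < 1 := by
    rw [hqdef]; apply Real.exp_lt_one_iff.mpr
    have : (0:ℝ) < ε/(2*d) := by positivity
    linarith
  have hQ1 : Q < 1 := by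
    rw [hQdef]; apply Real.exp_lt_one_iff.mpr; linarith
  have hSd : (0:ℝ) ≤ (2/(1-q))^d := by
    have : (0:ℝ) < 1 - q := by linarith
    positivity
  calc ∑ v₁ ∈ V, ∑ v₂ ∈ V, (if sameCube B v₁ v₂ then 0 else Real.exp (-ε * supDist v₁ v₂))
      ≤ ∑ v₁ ∈ V, (∑ i : Fin d, Q ^ (1 + min ((v₁ i % (B:ℤ)).toNat) (B - 1 - (v₁ i % (B:ℤ)).toNat)))
          * (2/(1-q))^d :=
        Finset.sum_le_sum fun v₁ _ => innerSum_bound hd hB hε V v₁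
    _ = (2/(1-q))^d * ∑ v₁ ∈ V, (∑ i : Fin d, Q ^ (1 + min ((v₁ i % (B:ℤ)).toNat) (B - 1 - (v₁ i % (B:ℤ)).toNat))) := by
        rw [Finset.mul_sum]
        exact Finset.sum_congr rfl fun v _ => by ring
    _ ≤ _ := mul_le_mul_of_nonneg_left (T_bound hd hB (Real.exp_nonneg _) hQ1 V) hSd

/-- **Lemma 4.7 (a combinatorial double-sum estimate).**
Let `𝕍_n ⊂ ℤ^d` be finite sets with `|∂_B 𝕍_n| = o(|𝕍_n|)` for every `B`. Then for
every `ε > 0`,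
`lim_{B→∞} limsup_{n→∞} |𝕍_n|⁻¹ Σ_{v₁,v₂ ∈ 𝕍_n, v₁ ≁ v₂} e^{−ε ‖v₁−v₂‖} = 0`. -/
theorem double_sum_combinatorial_estimate
    (d : ℕ) (hd : 0 < d)
    (𝕍 : ℕ → Finset (Fin d → ℤ))
    (hbdry : ∀ B : ℕ, 1 ≤ B →
      Tendsto (fun n : ℕ =>
          ((cubeBoundary B (↑(𝕍 n) : Set (Fin d → ℤ))).ncard : ℝ) / ((𝕍 n).card : ℝ))
        atTop (nhds 0))
    (ε : ℝ) (hε : 0 < ε) :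
    Tendsto (fun B : ℕ =>
        limsup (fun n : ℕ =>
            (1 / ((𝕍 n).card : ℝ)) *
              ∑ v₁ ∈ 𝕍 n, ∑ v₂ ∈ 𝕍 n,
                (if sameCube B v₁ v₂ then 0 else Real.exp (-ε * supDist v₁ v₂)))
          atTop)
      atTop (nhds 0) := by
  classical
  set q := Real.exp (-(ε/(2*d))) with hqdef
  set Q := Real.exp (-(ε/2)) with hQdef
  have hd' : (0:ℝ) < d := by exact_mod_cast hd
  have hq1 : q < 1 := by
    rw [hqdef]; apply Real.exp_lt_one_iff.mpr
    have : (0:ℝ) < ε/(2*d) := by positivity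
    linarith
  have hQ1 : Q < 1 := by
    rw [hQdef]; apply Real.exp_lt_one_iff.mpr; linarith
  have h1q : (0:ℝ) < 1 - q := by linarith
  have h1Q : (0:ℝ) < 1 - Q := by linarith
  set Sd : ℝ := (2/(1-q))^d with hSddef
  have hSd0 : 0 ≤ Sd := by positivity
  set C : ℝ := Sd * ((d:ℝ) * (2/(1-Q))) with hCdef
  have hC0 : 0 ≤ C := by positivity
  set f : ℕ → ℕ → ℝ := fun B n =>
    (1 / ((𝕍 n).card : ℝ)) *
      ∑ v₁ ∈ 𝕍 n, ∑ v₂ ∈ 𝕍 n,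
        (if sameCube B v₁ v₂ then 0 else Real.exp (-ε * supDist v₁ v₂)) with hfdef
  set r : ℕ → ℕ → ℝ := fun B n =>
    ((cubeBoundary B (↑(𝕍 n) : Set (Fin d → ℤ))).ncard : ℝ) / ((𝕍 n).card : ℝ) with hrdef
  -- nonnegativity of f
  have hf0 : ∀ B n, 0 ≤ f B n := by
    intro B n
    apply mul_nonneg (by positivity)
    apply Finset.sum_nonneg fun v₁ _ => Finset.sum_nonneg fun v₂ _ => ?_
    split
    · exact le_refl _
    · exact (Real.exp_nonneg _)
  -- the key estimate: for B ≥ 1, f B n ≤ Sd * d * r B n + C / B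
  have hkey : ∀ B : ℕ, 1 ≤ B → ∀ n : ℕ, f B n ≤ Sd * (d:ℝ) * r B n + C / B := by
    intro B hB n
    have hBpos : (0:ℝ) < B := by exact_mod_cast hB
    have hmb := main_bound (B := B) hd hB hε (𝕍 n)
    rcases eq_or_lt_of_le (Nat.cast_nonneg ((𝕍 n).card) : (0:ℝ) ≤ _) with hc | hc
    · -- card = 0 : V is empty, f = 0
      have hVempty : 𝕍 n = ∅ := by
        have : (𝕍 n).card = 0 := by exact_mod_cast hc.symm
        exact Finset.card_eq_zero.mp this
      have hfz : f B n = 0 := by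
        simp only [hfdef, hVempty, Finset.sum_empty, mul_zero]
      rw [hfz]
      have hr0 : 0 ≤ r B n := by
        apply div_nonneg (Nat.cast_nonneg _) (Nat.cast_nonneg _)
      positivity
    · -- card > 0
      have hcne : ((𝕍 n).card : ℝ) ≠ 0 := ne_of_gt hc
      have hstep : f B n ≤ (1 / ((𝕍 n).card : ℝ)) *
          (Sd * ((d:ℝ) * ((cubeBoundary B (↑(𝕍 n) : Set (Fin d → ℤ))).ncard : ℝ)
            + (((𝕍 n).card : ℝ) / B) * ((d:ℝ) * (2/(1-Q))))) := by
        apply mul_le_mul_of_nonneg_left hmb (by positivity)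
      refine hstep.trans (le_of_eq ?_)
      rw [hrdef, hCdef]
      field_simp
  -- limsup bound for each B ≥ 1
  have hlimsup_ub : ∀ B : ℕ, 1 ≤ B →
      limsup (fun n => f B n) atTop ≤ C / B := by
    intro B hB
    have hg : Tendsto (fun n => Sd * (d:ℝ) * r B n + C / B) atTop (nhds (C / B)) := by
      have h1 : Tendsto (fun n => Sd * (d:ℝ) * r B n) atTop (nhds 0) := by
        simpa using (hbdry B hB).const_mul (Sd * (d:ℝ))
      have h2 : Tendsto (fun _ : ℕ => C / (B:ℝ)) atTop (nhds (C / B)) := tendsto_const_nhds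
      simpa using h1.add h2
    have hgb : IsBoundedUnder (· ≤ ·) atTop (fun n => Sd * (d:ℝ) * r B n + C / B) :=
      hg.isBoundedUnder_le
    have hfb : IsBoundedUnder (· ≥ ·) atTop (fun n => f B n) :=
      Filter.isBoundedUnder_of ⟨0, fun n => hf0 B n⟩
    calc limsup (fun n => f B n) atTop
        ≤ limsup (fun n => Sd * (d:ℝ) * r B n + C / B) atTop :=
          limsup_le_limsup (Eventually.of_forall (hkey B hB))
            hfb.isCoboundedUnder_le hgb
      _ = C / B := hg.limsup_eq
  have hlimsup_lb : ∀ B : ℕ, 1 ≤ B → 0 ≤ limsup (fun n => f B n) atTop := by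
    intro B hB
    have hg : Tendsto (fun n => Sd * (d:ℝ) * r B n + C / B) atTop (nhds (C / B)) := by
      have h1 : Tendsto (fun n => Sd * (d:ℝ) * r B n) atTop (nhds 0) := by
        simpa using (hbdry B hB).const_mul (Sd * (d:ℝ))
      have h2 : Tendsto (fun _ : ℕ => C / (B:ℝ)) atTop (nhds (C / B)) := tendsto_const_nhds
      simpa using h1.add h2
    have hfbd : IsBoundedUnder (· ≤ ·) atTop (fun n => f B n) :=
      hg.isBoundedUnder_le.mono_le (Eventually.of_forall (hkey B hB))
    exact le_limsup_of_frequently_le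
      ((Eventually.of_forall fun (n : ℕ) => hf0 B n).frequently) hfbd
  -- squeeze in B
  apply tendsto_of_tendsto_of_tendsto_of_le_of_le' (g := fun _ : ℕ => (0:ℝ))
    (h := fun B : ℕ => C / B) tendsto_const_nhds (tendsto_const_div_atTop_nhds_zero_nat C)
  · filter_upwards [eventually_ge_atTop 1] with B hB
    exact hlimsup_lb B hB
  · filter_upwards [eventually_ge_atTop 1] with B hB
    exact hlimsup_ub B hB

end
end
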